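/- arXiv:1610.02881 — 5 statements merged into one kernel-verified Lean document; each statement's English description precedes it below -/
import Mathlib

section
/- Let F, G : [a,b] × ℝ → ℝ be continuous with G Lipschitz in the second variable, and suppose F(x,y) < G(x,y) for all (x,y). If y, z : [a,b] → ℝ are differentiable with y'(x) = F(x, y(x)), z'(x) = G(x, z(x)) for all x, and y(a) = z(a), then y(x) < z(x) for all x ∈ (a,b]. -/
private lemma deriv_pos_right {w : ℝ → ℝ} {c d : ℝ} (hw : HasDerivAt w d c) (hd : 0 < d) :
    ∀ᶠ x in nhdsWithin c (Set.Ioi c), w c < w x := by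
  have h : Filter.Tendsto (slope w c) (nhdsWithin c (Set.Ioi c \ {c})) (nhds d) :=
    hasDerivWithinAt_iff_tendsto_slope.mp (hw.hasDerivWithinAt (s := Set.Ioi c))
  rw [show Set.Ioi c \ {c} = Set.Ioi c by
    ext x; simp (config := {contextual := true}) [lt_iff_le_and_ne, ne_comm]] at h
  have hpos : ∀ᶠ x in nhdsWithin c (Set.Ioi c), 0 < slope w c x :=
    h.eventually (eventually_gt_nhds hd)
  filter_upwards [hpos, self_mem_nhdsWithin] with x hs hx
  rw [slope_def_field] at hs
  have hxc : 0 < x - c := sub_pos.mpr hx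
  have := mul_pos hs hxc
  rw [div_mul_cancel₀ _ (ne_of_gt hxc)] at this
  linarith

private lemma deriv_pos_left {w : ℝ → ℝ} {c d : ℝ} (hw : HasDerivAt w d c) (hd : 0 < d) :
    ∀ᶠ x in nhdsWithin c (Set.Iio c), w x < w c := by
  have h : Filter.Tendsto (slope w c) (nhdsWithin c (Set.Iio c \ {c})) (nhds d) :=
    hasDerivWithinAt_iff_tendsto_slope.mp (hw.hasDerivWithinAt (s := Set.Iio c))
  rw [show Set.Iio c \ {c} = Set.Iio c by
    ext x; simp (config := {contextual := true})] at h
  have hpos : ∀ᶠ x in nhdsWithin c (Set.Iio c), 0 < slope w c x :=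
    h.eventually (eventually_gt_nhds hd)
  filter_upwards [hpos, self_mem_nhdsWithin] with x hs hx
  rw [slope_def_field] at hs
  have hxc : x - c < 0 := sub_neg.mpr hx
  have := mul_neg_of_pos_of_neg hs hxc
  rw [div_mul_cancel₀ _ (ne_of_lt hxc)] at this
  linarith

/-- Comparison theorem for scalar ODEs: if `F < G` pointwise, `G` is Lipschitz in the
second variable, `y' = F(x, y)`, `z' = G(x, z)` on `[a,b]` and `y a = z a`, then
`y < z` on `(a, b]`. -/
theorem ode_comparison_strict
    (a b : ℝ) (hab : a < b) (F G : ℝ → ℝ → ℝ)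
    (hFcont : ContinuousOn (Function.uncurry F) (Set.Icc a b ×ˢ Set.univ))
    (hGcont : ContinuousOn (Function.uncurry G) (Set.Icc a b ×ˢ Set.univ))
    (K : NNReal) (hGlip : ∀ x ∈ Set.Icc a b, LipschitzWith K (G x))
    (hFG : ∀ x ∈ Set.Icc a b, ∀ y : ℝ, F x y < G x y)
    (y z : ℝ → ℝ)
    (hy : ∀ x ∈ Set.Icc a b, HasDerivAt y (F x (y x)) x)
    (hz : ∀ x ∈ Set.Icc a b, HasDerivAt z (G x (z x)) x)
    (h0 : y a = z a) :
    ∀ x ∈ Set.Ioc a b, y x < z x := by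
  set w : ℝ → ℝ := fun x => z x - y x with hwdef
  have hw : ∀ x ∈ Set.Icc a b, HasDerivAt w (G x (z x) - F x (y x)) x :=
    fun x hx => (hz x hx).sub (hy x hx)
  have hwa : w a = 0 := by simp [hwdef, h0]
  -- key: if w c = 0 at a point c of [a,b], the derivative of w at c is positive
  have hder : ∀ c ∈ Set.Icc a b, w c = 0 → 0 < G c (z c) - F c (y c) := by
    intro c hc hwc
    have hzy : z c = y c := by have := hwc; simp [hwdef] at this; linarith
    rw [hzy]
    exact sub_pos.mpr (hFG c hc (y c))
  suffices hpos : ∀ x ∈ Set.Ioc a b, 0 < w x by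
    intro x hx; have := hpos x hx; simp [hwdef] at this; linarith
  -- w > 0 just to the right of a
  have haicc : a ∈ Set.Icc a b := ⟨le_refl a, le_of_lt hab⟩
  have ha : ∀ᶠ x in nhdsWithin a (Set.Ioi a), 0 < w x := by
    have := deriv_pos_right (hw a haicc) (hder a haicc hwa)
    filter_upwards [this] with x hx; rwa [hwa] at hx
  obtain ⟨u, hu_mem, hu⟩ := (mem_nhdsGT_iff_exists_Ioc_subset).mp ha
  set u' := min u (a + (b - a) / 2) with hu'def
  have hau' : a < u' := lt_min hu_mem (by linarith)
  have hu'b : u' < b := lt_of_le_of_lt (min_le_right _ _) (by linarith)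
  have hu'pos : ∀ x ∈ Set.Ioc a u', 0 < w x := fun x hx =>
    hu ⟨hx.1, le_trans hx.2 (min_le_left _ _)⟩
  by_contra hcon
  push_neg at hcon
  obtain ⟨x₀, hx₀, hwx₀⟩ := hcon
  set S : Set ℝ := {x | x ∈ Set.Ioc a b ∧ w x ≤ 0} with hSdef
  have hS_ne : S.Nonempty := ⟨x₀, hx₀, hwx₀⟩
  have hS_bdd : BddBelow S := ⟨a, fun x hx => le_of_lt hx.1.1⟩
  set c := sInf S with hcdef
  have hS_lb : ∀ x ∈ S, u' < x := by
    intro x hx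
    by_contra hle
    push_neg at hle
    exact absurd (hu'pos x ⟨hx.1.1, hle⟩) (not_lt.mpr hx.2)
  have hu'c : u' ≤ c := le_csInf hS_ne (fun x hx => le_of_lt (hS_lb x hx))
  have hac : a < c := lt_of_lt_of_le hau' hu'c
  have hcb : c ≤ b := csInf_le_of_le hS_bdd (show x₀ ∈ S from ⟨hx₀, hwx₀⟩) hx₀.2
  have hc_icc : c ∈ Set.Icc a b := ⟨le_of_lt hac, hcb⟩
  -- w x > 0 for a < x < c
  have hlt : ∀ x, a < x → x < c → 0 < w x := by
    intro x hax hxc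
    by_contra hle
    push_neg at hle
    have : x ∈ S := ⟨⟨hax, le_trans (le_of_lt hxc) hcb⟩, hle⟩
    exact absurd (csInf_le hS_bdd this) (not_le.mpr hxc)
  -- w is continuous at c
  have hcontc : ContinuousAt w c := (hw c hc_icc).continuousAt
  -- w c ≤ 0 : c is in the closure of S
  have hc_cl : c ∈ closure S := csInf_mem_closure hS_ne hS_bdd
  have hne : (nhdsWithin c S).NeBot := mem_closure_iff_nhdsWithin_neBot.mp hc_cl
  have hwc_le : w c ≤ 0 := by
    have ht : Filter.Tendsto w (nhdsWithin c S) (nhds (w c)) :=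
      hcontc.continuousWithinAt.tendsto
    refine le_of_tendsto ht ?_
    filter_upwards [self_mem_nhdsWithin] with x hx
    exact hx.2
  have hwc_ge : 0 ≤ w c := by
    have hcl : c ∈ closure (Set.Ioo a c) := by
      rw [closure_Ioo (ne_of_lt hac)]
      exact ⟨le_of_lt hac, le_refl c⟩
    have hne2 : (nhdsWithin c (Set.Ioo a c)).NeBot :=
      mem_closure_iff_nhdsWithin_neBot.mp hcl
    have ht : Filter.Tendsto w (nhdsWithin c (Set.Ioo a c)) (nhds (w c)) :=
      hcontc.continuousWithinAt.tendsto
    refine ge_of_tendsto ht ?_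
    filter_upwards [self_mem_nhdsWithin] with x hx
    exact le_of_lt (hlt x hx.1 hx.2)
  have hwc : w c = 0 := le_antisymm hwc_le hwc_ge
  -- derivative at c is positive, so w < w c = 0 just left of c; contradiction
  have hleft := deriv_pos_left (hw c hc_icc) (hder c hc_icc hwc)
  have hmem : Set.Ioi a ∈ nhdsWithin c (Set.Iio c) :=
    nhdsWithin_le_nhds (Ioi_mem_nhds hac)
  have : ∀ᶠ x in nhdsWithin c (Set.Iio c), False := by
    filter_upwards [hleft, hmem, self_mem_nhdsWithin] with x h1 h2 h3
    have := hlt x h2 h3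
    rw [hwc] at h1
    linarith
  exact this.exists.elim (fun x hx => hx)
end

section
/- Let F, G : [a,b] × ℝ → ℝ be continuous with F Lipschitz in the second variable, and suppose F(x,y) < G(x,y) for all (x,y). If y, z : [a,b] → ℝ solve y' = F(x,y), z' = G(x,z) and there exists c ∈ (a,b) with y(c) = z(c), then y(x) > z(x) for all x ∈ [a,c) and y(x) < z(x) for all x ∈ (c,b]. -/
open Set Filter Topology

private lemma slope_ev_pos {w : ℝ → ℝ} {w' d : ℝ} (h : HasDerivAt w w' d) (hpos : 0 < w') :
    ∀ᶠ t in 𝓝[≠] d, 0 < slope w d t :=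
  (hasDerivAt_iff_tendsto_slope.mp h).eventually (eventually_gt_nhds hpos)

private lemma ev_pos_right {w : ℝ → ℝ} {w' d : ℝ} (h : HasDerivAt w w' d) (hpos : 0 < w')
    (hwd : w d = 0) : ∀ᶠ t in 𝓝[>] d, 0 < w t := by
  have := (slope_ev_pos h hpos).filter_mono
    (nhdsWithin_mono d (fun t ht => ne_of_gt ht))
  filter_upwards [this, self_mem_nhdsWithin] with t hs ht
  have htd : 0 < t - d := sub_pos.mpr ht
  have := mul_pos hs htd
  rw [slope_def_field, div_mul_cancel₀ _ (ne_of_gt htd)] at this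
  simpa [hwd] using this

private lemma ev_neg_left {w : ℝ → ℝ} {w' d : ℝ} (h : HasDerivAt w w' d) (hpos : 0 < w')
    (hwd : w d = 0) : ∀ᶠ t in 𝓝[<] d, w t < 0 := by
  have := (slope_ev_pos h hpos).filter_mono
    (nhdsWithin_mono d (fun t ht => ne_of_lt ht))
  filter_upwards [this, self_mem_nhdsWithin] with t hs ht
  have htd : t - d < 0 := sub_neg.mpr ht
  have := mul_neg_of_pos_of_neg hs htd
  rw [slope_def_field, div_mul_cancel₀ _ (ne_of_lt htd)] at this
  simpa [hwd] using this

private lemma key_right (a b c : ℝ) (w w' : ℝ → ℝ)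
    (hw : ∀ x ∈ Icc a b, HasDerivAt w (w' x) x)
    (hpos : ∀ x ∈ Icc a b, w x = 0 → 0 < w' x)
    (hc : c ∈ Icc a b) (hwc : w c = 0) :
    ∀ x ∈ Ioc c b, 0 < w x := by
  by_contra hcon
  push_neg at hcon
  obtain ⟨x0, hx0, hwx0⟩ := hcon
  have hcont : ContinuousOn w (Icc a b) :=
    fun x hx => (hw x hx).continuousAt.continuousWithinAt
  -- w > 0 on a small interval right of c
  have h1 : ∀ᶠ t in 𝓝[>] c, 0 < w t := ev_pos_right (hw c hc) (hpos c hc hwc) hwc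
  obtain ⟨u, hu, hsub⟩ := mem_nhdsGT_iff_exists_Ioc_subset.mp h1
  set p : ℝ := min u ((c + x0) / 2) with hp
  have hcp : c < p := lt_min hu (by linarith [hx0.1])
  have hpx0 : p < x0 := lt_of_le_of_lt (min_le_right _ _) (by linarith [hx0.1])
  have hwp : 0 < w p := hsub ⟨hcp, min_le_left _ _⟩
  have hIccsub : Icc p x0 ⊆ Icc a b :=
    Icc_subset_Icc (le_trans hc.1 (le_of_lt hcp)) (le_trans hx0.2 le_rfl)
  set T : Set ℝ := Icc p x0 ∩ w ⁻¹' Iic 0 with hT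
  have hTclosed : IsClosed T :=
    (hcont.mono hIccsub).preimage_isClosed_of_isClosed isClosed_Icc isClosed_Iic
  have hTne : T.Nonempty := ⟨x0, ⟨le_of_lt hpx0, le_rfl⟩, hwx0⟩
  have hTbdd : BddBelow T := ⟨p, fun t ht => ht.1.1⟩
  set d : ℝ := sInf T with hd
  have hdT : d ∈ T := hTclosed.csInf_mem hTne hTbdd
  have hdIcc : d ∈ Icc p x0 := hdT.1
  have hwd_le : w d ≤ 0 := hdT.2
  have hdab : d ∈ Icc a b := hIccsub hdIcc
  have hpd : p < d := lt_of_le_of_ne hdIcc.1 (by intro heq; rw [← heq] at hwd_le; exact absurd hwd_le (not_le.mpr hwp))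
  -- w > 0 on [p, d)
  have hposIco : ∀ t ∈ Ico p d, 0 < w t := by
    intro t ht
    by_contra hle
    push_neg at hle
    have : t ∈ T := ⟨⟨ht.1, le_trans (le_of_lt ht.2) hdIcc.2⟩, hle⟩
    exact absurd (csInf_le hTbdd this) (not_le.mpr ht.2)
  -- w d = 0 by continuity from the left
  have hwd : w d = 0 := by
    refine le_antisymm hwd_le ?_
    have htend : Tendsto w (𝓝[<] d) (𝓝 (w d)) :=
      ((hw d hdab).continuousAt.tendsto).mono_left nhdsWithin_le_nhds
    have hev : ∀ᶠ t in 𝓝[<] d, 0 ≤ w t := by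
      filter_upwards [Ioo_mem_nhdsLT_of_mem ⟨hpd, le_rfl⟩] with t ht
      exact le_of_lt (hposIco t ⟨le_of_lt ht.1, ht.2⟩)
    exact ge_of_tendsto htend hev
  -- derivative at d positive ⇒ w < 0 just left of d, contradiction
  have hneg : ∀ᶠ t in 𝓝[<] d, w t < 0 := ev_neg_left (hw d hdab) (hpos d hdab hwd) hwd
  have : ∀ᶠ t in 𝓝[<] d, False := by
    filter_upwards [hneg, Ioo_mem_nhdsLT_of_mem ⟨hpd, le_rfl⟩] with t h1 h2
    exact absurd (hposIco t ⟨le_of_lt h2.1, h2.2⟩) (not_lt.mpr (le_of_lt h1))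
  exact this.exists.elim (fun _ h => h)

private lemma key_left (a b c : ℝ) (w w' : ℝ → ℝ)
    (hw : ∀ x ∈ Icc a b, HasDerivAt w (w' x) x)
    (hpos : ∀ x ∈ Icc a b, w x = 0 → 0 < w' x)
    (hc : c ∈ Icc a b) (hwc : w c = 0) :
    ∀ x ∈ Ico a c, w x < 0 := by
  intro x hx
  have hmem : ∀ t ∈ Icc (-b) (-a), -t ∈ Icc a b := by
    intro t ht
    exact ⟨by linarith [ht.2], by linarith [ht.1]⟩
  have hv : ∀ t ∈ Icc (-b) (-a), HasDerivAt (fun t => -w (-t)) (w' (-t)) t := by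
    intro t ht
    have h1 : HasDerivAt (fun t : ℝ => w (-t)) (w' (-t) * (-1)) t :=
      (hw (-t) (hmem t ht)).comp t (hasDerivAt_neg t)
    have h2 := h1.neg
    simp only [mul_neg, mul_one, neg_neg] at h2
    exact h2
  have := key_right (-b) (-a) (-c) (fun t => -w (-t)) (fun t => w' (-t)) hv
    (fun t ht h0 => hpos (-t) (hmem t ht) (by simpa [neg_eq_zero] using h0))
    ⟨by linarith [hc.2], by linarith [hc.1]⟩ (by simpa using hwc)
  have hres := this (-x) ⟨by linarith [hx.2], by linarith [hx.1]⟩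
  simpa using hres

/-- Two-sided comparison theorem: if `F < G` pointwise, `F` is Lipschitz in the second
variable, `y' = F(x,y)`, `z' = G(x,z)` on `[a,b]` and `y c = z c` at an interior point
`c`, then `y > z` on `[a, c)` and `y < z` on `(c, b]`. -/
theorem ode_comparison_two_sided
    (a b c : ℝ) (F G : ℝ → ℝ → ℝ)
    (hFcont : ContinuousOn (Function.uncurry F) (Set.Icc a b ×ˢ Set.univ))
    (hGcont : ContinuousOn (Function.uncurry G) (Set.Icc a b ×ˢ Set.univ))
    (K : NNReal) (hFlip : ∀ x ∈ Set.Icc a b, LipschitzWith K (F x))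
    (hFG : ∀ x ∈ Set.Icc a b, ∀ y : ℝ, F x y < G x y)
    (y z : ℝ → ℝ)
    (hy : ∀ x ∈ Set.Icc a b, HasDerivAt y (F x (y x)) x)
    (hz : ∀ x ∈ Set.Icc a b, HasDerivAt z (G x (z x)) x)
    (hc : c ∈ Set.Ioo a b) (hyz : y c = z c) :
    (∀ x ∈ Set.Ico a c, y x > z x) ∧ (∀ x ∈ Set.Ioc c b, y x < z x) := by
  set w : ℝ → ℝ := fun x => z x - y x with hwdef
  set w' : ℝ → ℝ := fun x => G x (z x) - F x (y x) with hw'def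
  have hw : ∀ x ∈ Icc a b, HasDerivAt w (w' x) x :=
    fun x hx => (hz x hx).sub (hy x hx)
  have hpos : ∀ x ∈ Icc a b, w x = 0 → 0 < w' x := by
    intro x hx h0
    have hzy : z x = y x := sub_eq_zero.mp h0
    have : F x (y x) < G x (y x) := hFG x hx (y x)
    simp only [hw'def, hzy]
    linarith
  have hcIcc : c ∈ Icc a b := ⟨le_of_lt hc.1, le_of_lt hc.2⟩
  have hwc : w c = 0 := by simp [hwdef, hyz]
  constructor
  · intro x hx
    have := key_left a b c w w' hw hpos hcIcc hwc x hx
    simp only [hwdef] at this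
    linarith
  · intro x hx
    have := key_right a b c w w' hw hpos hcIcc hwc x hx
    simp only [hwdef] at this
    linarith
end

section
/- Let F, G : [a,b] × ℝ → ℝ with F(x,y) < G(x,y) everywhere and both Lipschitz in y. Let z solve z' = G(x,z) on [a,b], and let y₁, y₂ solve y' = F(x,y), intersecting z at points c₁ < c₂ respectively (y₁(c₁) = z(c₁), y₂(c₂) = z(c₂)). Then y₁(x) < y₂(x) for all x where both are defined and x ≥ c₁; in particular, in the region above z and between c₁ and c₂, the curve y₂ lies strictly above y₁ after c₁. -/
open Filter Topology Set

/-- If `w` has derivative `g` on `[a,b]`, `g > 0` at every zero of `w`, and `w c = 0`,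
then `w > 0` strictly after `c` on `[a,b]`. -/
lemma pos_after_of_deriv_pos_at_zeros {a b c : ℝ} {w g : ℝ → ℝ}
    (hw : ∀ x ∈ Set.Icc a b, HasDerivAt w (g x) x)
    (hg : ∀ x ∈ Set.Icc a b, w x = 0 → 0 < g x)
    (hc : c ∈ Set.Icc a b) (hwc : w c = 0) :
    ∀ x ∈ Set.Icc a b, c < x → 0 < w x := by
  by_contra hcon
  push_neg at hcon
  obtain ⟨x₁, hx₁, hcx₁, hwx₁⟩ := hcon
  -- near any zero, `w` is positive on the right and negative on the left
  have key : ∀ t ∈ Set.Icc a b, w t = 0 →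
      (∀ᶠ x in 𝓝[>] t, 0 < w x) ∧ (∀ᶠ x in 𝓝[<] t, w x < 0) := by
    intro t ht hwt
    have hslope := hasDerivAt_iff_tendsto_slope.mp (hw t ht)
    have hpos := hg t ht hwt
    have hev : ∀ᶠ x in 𝓝[≠] t, 0 < slope w t x :=
      hslope.eventually (eventually_gt_nhds hpos)
    constructor
    · have h1 : ∀ᶠ x in 𝓝[>] t, 0 < slope w t x :=
        hev.filter_mono (nhdsWithin_mono t (fun x hx => ne_of_gt hx))
      filter_upwards [h1, self_mem_nhdsWithin] with x hx hx'
      rw [slope_def_field, hwt, sub_zero] at hx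
      rcases div_pos_iff.mp hx with ⟨h, _⟩ | ⟨_, h⟩
      · exact h
      · linarith [sub_pos.mpr (mem_Ioi.mp hx')]
    · have h1 : ∀ᶠ x in 𝓝[<] t, 0 < slope w t x :=
        hev.filter_mono (nhdsWithin_mono t (fun x hx => ne_of_lt hx))
      filter_upwards [h1, self_mem_nhdsWithin] with x hx hx'
      rw [slope_def_field, hwt, sub_zero] at hx
      rcases div_pos_iff.mp hx with ⟨_, h⟩ | ⟨h, _⟩
      · linarith [sub_neg.mpr (mem_Iio.mp hx')]
      · exact h
  set T : Set ℝ := {x | x ∈ Set.Ioc c x₁ ∧ w x ≤ 0} with hT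
  have hTne : x₁ ∈ T := ⟨⟨hcx₁, le_rfl⟩, hwx₁⟩
  have hbdd : BddBelow T := ⟨c, fun x hx => hx.1.1.le⟩
  set t := sInf T with ht_def
  have htc : c ≤ t := le_csInf ⟨x₁, hTne⟩ (fun x hx => hx.1.1.le)
  have htx₁ : t ≤ x₁ := csInf_le hbdd hTne
  have htab : t ∈ Set.Icc a b := ⟨hc.1.trans htc, htx₁.trans hx₁.2⟩
  -- w t ≤ 0
  have hwt_le : w t ≤ 0 := by
    by_contra h
    push_neg at h
    have hev : ∀ᶠ x in 𝓝 t, 0 < w x :=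
      ((hw t htab).continuousAt).eventually_const_lt h
    obtain ⟨ε, hε, hball⟩ := Metric.eventually_nhds_iff.mp hev
    obtain ⟨x, hxT, hxlt⟩ := exists_lt_of_csInf_lt ⟨x₁, hTne⟩
      (lt_add_of_pos_right t hε)
    have hx_ge : t ≤ x := csInf_le hbdd hxT
    have : 0 < w x := hball (by rw [Real.dist_eq, abs_of_nonneg (by linarith)]; linarith)
    linarith [hxT.2]
  -- t > c
  have hct : c < t := by
    rcases lt_or_eq_of_le htc with h | h
    · exact h
    have hwt0 : w t = 0 := by rw [← h]; exact hwc
    have hright := (key t htab hwt0).1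
    obtain ⟨u, hu, hsub⟩ := mem_nhdsGT_iff_exists_Ioc_subset.mp hright
    obtain ⟨x, hxT, hxlt⟩ := exists_lt_of_csInf_lt ⟨x₁, hTne⟩ hu
    have : 0 < w x := hsub ⟨h ▸ hxT.1.1, hxlt.le⟩
    linarith [hxT.2]
  -- w > 0 on (c, t)
  have hmid : ∀ x ∈ Set.Ioo c t, 0 < w x := by
    intro x hx
    by_contra h
    push_neg at h
    have hxT : x ∈ T := ⟨⟨hx.1, hx.2.le.trans htx₁⟩, h⟩
    exact absurd (csInf_le hbdd hxT) (not_le.mpr hx.2)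
  -- w t = 0
  have hwt0 : w t = 0 := by
    rcases lt_or_eq_of_le hwt_le with h | h
    · exfalso
      have hev : ∀ᶠ x in 𝓝 t, w x < 0 :=
        ((hw t htab).continuousAt).eventually_lt_const h
      have hev' : ∀ᶠ x in 𝓝[<] t, w x < 0 := hev.filter_mono nhdsWithin_le_nhds
      have hmem : Set.Ioo c t ∈ 𝓝[<] t := Ioo_mem_nhdsLT_of_mem ⟨hct, le_rfl⟩
      obtain ⟨x, hx1, hx2⟩ := (hev'.and (eventually_of_mem hmem fun x hx => hx)).exists
      exact absurd (hmid x hx2) (not_lt.mpr hx1.le)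
    · exact h
  -- contradiction: w < 0 just left of t, but w > 0 on (c,t)
  have hleft := (key t htab hwt0).2
  have hmem : Set.Ioo c t ∈ 𝓝[<] t := Ioo_mem_nhdsLT_of_mem ⟨hct, le_rfl⟩
  obtain ⟨x, hx1, hx2⟩ := (hleft.and (eventually_of_mem hmem (fun x hx => hx))).exists
  exact absurd (hmid x hx2) (not_lt.mpr hx1.le)

/-- Mirrored version: under the same hypotheses, `w < 0` strictly before `c`. -/
lemma neg_before_of_deriv_pos_at_zeros {a b c : ℝ} {w g : ℝ → ℝ}
    (hw : ∀ x ∈ Set.Icc a b, HasDerivAt w (g x) x)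
    (hg : ∀ x ∈ Set.Icc a b, w x = 0 → 0 < g x)
    (hc : c ∈ Set.Icc a b) (hwc : w c = 0) :
    ∀ x ∈ Set.Icc a b, x < c → w x < 0 := by
  have hw' : ∀ x ∈ Set.Icc (-b) (-a), HasDerivAt (fun s => -w (-s)) (g (-x)) x := by
    intro x hx
    have hmem : -x ∈ Set.Icc a b := ⟨by linarith [hx.2], by linarith [hx.1]⟩
    have h1 := ((hw (-x) hmem).comp x (hasDerivAt_neg x)).neg
    rw [show (-(g (-x) * -1)) = g (-x) by ring] at h1
    exact h1
  have hg' : ∀ x ∈ Set.Icc (-b) (-a), -w (-x) = 0 → 0 < g (-x) := by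
    intro x hx hx0
    exact hg (-x) ⟨by linarith [hx.2], by linarith [hx.1]⟩ (by linarith)
  have hc' : -c ∈ Set.Icc (-b) (-a) := ⟨by linarith [hc.2], by linarith [hc.1]⟩
  have := pos_after_of_deriv_pos_at_zeros hw' hg' hc' (by simp [hwc])
  intro x hx hxc
  have := this (-x) ⟨by linarith [hx.2], by linarith [hx.1]⟩ (by linarith)
  rw [neg_neg] at this; linarith

/-- Ordering of α-profiles meeting a common β-profile: if `y₁`, `y₂` solve `y' = F`,
`z` solves `z' = G` with `F < G` pointwise, and `y₁` meets `z` at `c₁`, `y₂` meets `z`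
at `c₂` with `c₁ < c₂`, then `y₁ < y₂` at every point `x ≥ c₁` of the domain. -/
theorem alpha_profiles_ordered
    (a b c₁ c₂ : ℝ) (F G : ℝ → ℝ → ℝ)
    (K : NNReal)
    (hFlip : ∀ x ∈ Set.Icc a b, LipschitzWith K (F x))
    (hGlip : ∀ x ∈ Set.Icc a b, LipschitzWith K (G x))
    (hFG : ∀ x ∈ Set.Icc a b, ∀ y : ℝ, F x y < G x y)
    (z y₁ y₂ : ℝ → ℝ)
    (hz : ∀ x ∈ Set.Icc a b, HasDerivAt z (G x (z x)) x)
    (hy₁ : ∀ x ∈ Set.Icc a b, HasDerivAt y₁ (F x (y₁ x)) x)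
    (hy₂ : ∀ x ∈ Set.Icc a b, HasDerivAt y₂ (F x (y₂ x)) x)
    (hc₁ : c₁ ∈ Set.Icc a b) (hc₂ : c₂ ∈ Set.Icc a b) (hcc : c₁ < c₂)
    (h₁ : y₁ c₁ = z c₁) (h₂ : y₂ c₂ = z c₂) :
    ∀ x ∈ Set.Icc a b, c₁ ≤ x → y₁ x < y₂ x := by
  -- Step A: y₁ < z strictly after c₁
  have hA : ∀ x ∈ Set.Icc a b, c₁ < x → y₁ x < z x := by
    have := pos_after_of_deriv_pos_at_zeros
      (w := fun x => z x - y₁ x) (g := fun x => G x (z x) - F x (y₁ x))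
      (fun x hx => (hz x hx).sub (hy₁ x hx))
      (fun x hx h0 => by
        have hz' : z x = y₁ x := by linarith [sub_eq_zero.mp h0]
        simp only [hz']
        linarith [hFG x hx (y₁ x)])
      hc₁ (by simp [h₁])
    intro x hx hcx
    have h' := this x hx hcx
    linarith
  -- Step B: z < y₂ strictly before c₂
  have hB : ∀ x ∈ Set.Icc a b, x < c₂ → z x < y₂ x := by
    have := neg_before_of_deriv_pos_at_zeros
      (w := fun x => z x - y₂ x) (g := fun x => G x (z x) - F x (y₂ x))
      (fun x hx => (hz x hx).sub (hy₂ x hx))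
      (fun x hx h0 => by
        have hz' : z x = y₂ x := by linarith [sub_eq_zero.mp h0]
        simp only [hz']
        linarith [hFG x hx (y₂ x)])
      hc₂ (by simp [h₂])
    intro x hx hcx
    have h' := this x hx hcx
    linarith
  -- Step C: y₁ c₂ < y₂ c₂
  have hC : y₁ c₂ < y₂ c₂ := by
    have := hA c₂ hc₂ hcc
    linarith [this, h₂.ge, h₂.le]
  -- continuity
  have hcont₁ : ContinuousOn y₁ (Set.Icc a b) :=
    fun t ht => ((hy₁ t ht).continuousAt).continuousWithinAt
  have hcont₂ : ContinuousOn y₂ (Set.Icc a b) :=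
    fun t ht => ((hy₂ t ht).continuousAt).continuousWithinAt
  -- Step D: y₁ and y₂ never touch on [a,b]
  have hD : ∀ x₀ ∈ Set.Icc a b, y₁ x₀ ≠ y₂ x₀ := by
    intro x₀ hx₀ heq
    set v : ℝ → ℝ → ℝ := fun t y => if t ∈ Set.Icc a b then F t y else 0 with hv_def
    have hv : ∀ t, LipschitzOnWith K (v t) Set.univ := by
      intro t
      by_cases ht : t ∈ Set.Icc a b
      · have hvt : v t = F t := by funext y; exact if_pos ht
        rw [hvt]
        exact (hFlip t ht).lipschitzOnWith (s := Set.univ)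
      · have hvt : v t = fun _ => (0 : ℝ) := by funext y; exact if_neg ht
        rw [hvt]
        exact ((LipschitzWith.const (0 : ℝ)).weaken (zero_le : (0 : NNReal) ≤ K)).lipschitzOnWith (s := Set.univ)
    have habs : y₁ c₂ = y₂ c₂ := by
      rcases le_or_gt c₂ x₀ with hle | hlt
      · have := ODE_solution_unique_of_mem_Icc_left (v := v) (s := fun _ => Set.univ) (fun t _ => hv t)
          (hcont₁.mono (Set.Icc_subset_Icc_right hx₀.2))
          (fun t ht => by
            have htab : t ∈ Set.Icc a b := ⟨ht.1.le, ht.2.trans hx₀.2⟩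
            have hveq : v t (y₁ t) = F t (y₁ t) := if_pos htab
            rw [hveq]
            exact (hy₁ t htab).hasDerivWithinAt)
          (fun t ht => trivial)
          (hcont₂.mono (Set.Icc_subset_Icc_right hx₀.2))
          (fun t ht => by
            have htab : t ∈ Set.Icc a b := ⟨ht.1.le, ht.2.trans hx₀.2⟩
            have hveq : v t (y₂ t) = F t (y₂ t) := if_pos htab
            rw [hveq]
            exact (hy₂ t htab).hasDerivWithinAt)
          (fun t ht => trivial) heq
        exact this ⟨hc₂.1, hle⟩
      · have := ODE_solution_unique_of_mem_Icc_right (v := v) (s := fun _ => Set.univ) (fun t _ => hv t)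
          (hcont₁.mono (Set.Icc_subset_Icc_left hx₀.1))
          (fun t ht => by
            have htab : t ∈ Set.Icc a b := ⟨hx₀.1.trans ht.1, ht.2.le⟩
            have hveq : v t (y₁ t) = F t (y₁ t) := if_pos htab
            rw [hveq]
            exact (hy₁ t htab).hasDerivWithinAt)
          (fun t ht => trivial)
          (hcont₂.mono (Set.Icc_subset_Icc_left hx₀.1))
          (fun t ht => by
            have htab : t ∈ Set.Icc a b := ⟨hx₀.1.trans ht.1, ht.2.le⟩
            have hveq : v t (y₂ t) = F t (y₂ t) := if_pos htab
            rw [hveq]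
            exact (hy₂ t htab).hasDerivWithinAt)
          (fun t ht => trivial) heq
        exact this ⟨hlt.le, hc₂.2⟩
    exact absurd habs (ne_of_lt hC)
  -- conclude
  intro x hx hcx
  rcases lt_trichotomy x c₂ with hlt | heq | hgt
  · rcases eq_or_lt_of_le hcx with h | h
    · subst h
      have := hB c₁ hx hlt
      linarith
    · linarith [hA x hx h, hB x hx hlt]
  · rw [heq]; exact hC
  · by_contra hle
    push_neg at hle
    have hsub : Set.Icc c₂ x ⊆ Set.Icc a b := Set.Icc_subset_Icc hc₂.1 hx.2
    have hcont : ContinuousOn (fun t => y₂ t - y₁ t) (Set.Icc c₂ x) :=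
      (hcont₂.mono hsub).sub (hcont₁.mono hsub)
    have hivt := intermediate_value_Icc' (le_of_lt hgt) hcont
    have h0 : (0 : ℝ) ∈ Set.Icc (y₂ x - y₁ x) (y₂ c₂ - y₁ c₂) := ⟨by linarith, by linarith⟩
    obtain ⟨t, htmem, ht0⟩ := hivt h0
    exact hD t (hsub htmem) (by
      have h' : y₂ t - y₁ t = 0 := ht0
      linarith)
end

section
/- Let κ : ℝ → ℝ be differentiable, and let a₁, a₂ > 0 (bounds on angular and linear acceleration). Fix s₀ with κ(s₀) ≠ 0. Define, for v ≥ 0, α(s₀,v) and β(s₀,v) as the max of lower bounds and min of upper bounds over the four scalar constraints |κ(s₀)·u + κ'(s₀)·v²| ≤ a₁ and |u| ≤ a₂ on the acceleration u. Then α(s₀, v) ≤ β(s₀, v) if and only if |κ'(s₀)|·v² ≤ a₁ + |κ(s₀)|·a₂. -/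
/-- Feasibility of the unicycle acceleration constraints: with curvature `κ`
(differentiable, `κ(s₀) ≠ 0`) and acceleration bounds `a₁, a₂ > 0`, define the
minimum acceleration `α(v)` as the max of the lower bounds and the maximum
acceleration `β(v)` as the min of the upper bounds arising from the four scalar
constraints `|κ(s₀)·u + κ'(s₀)·v²| ≤ a₁` and `|u| ≤ a₂`.  Then for `v ≥ 0`,
`α(v) ≤ β(v)` iff `|κ'(s₀)|·v² ≤ a₁ + |κ(s₀)|·a₂`. -/
theorem unicycle_feasible_iff
    (κ κ' : ℝ → ℝ) (hκ : ∀ x, HasDerivAt κ (κ' x) x)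
    (a₁ a₂ : ℝ) (ha₁ : 0 < a₁) (ha₂ : 0 < a₂)
    (s₀ : ℝ) (hκ₀ : κ s₀ ≠ 0)
    (α β : ℝ → ℝ)
    (hα : ∀ v, α v = max (-a₂)
      (if 0 < κ s₀ then (-a₁ - κ' s₀ * v ^ 2) / κ s₀
        else (a₁ - κ' s₀ * v ^ 2) / κ s₀))
    (hβ : ∀ v, β v = min a₂
      (if 0 < κ s₀ then (a₁ - κ' s₀ * v ^ 2) / κ s₀
        else (-a₁ - κ' s₀ * v ^ 2) / κ s₀)) :
    ∀ v : ℝ, 0 ≤ v →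
      (α v ≤ β v ↔ |κ' s₀| * v ^ 2 ≤ a₁ + |κ s₀| * a₂) := by
  intro v hv
  rw [hα, hβ, max_le_iff, le_min_iff, le_min_iff]
  rcases abs_cases (κ' s₀) with ⟨hc, hc0⟩ | ⟨hc, hc0⟩ <;>
  rcases lt_or_gt_of_ne hκ₀ with hk | hk <;>
    [ (have hk' : ¬ (0 < κ s₀) := not_lt.mpr hk.le);
      (have hk' : 0 < κ s₀ := hk);
      (have hk' : ¬ (0 < κ s₀) := not_lt.mpr hk.le);
      (have hk' : 0 < κ s₀ := hk) ] <;>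
    simp only [hk', if_true, if_false] <;>
    (first | rw [abs_of_neg hk] | rw [abs_of_pos hk]) <;>
    rw [hc] <;>
    constructor <;> intro h
  · obtain ⟨⟨-, h1⟩, h2, -⟩ := h
    rw [le_div_iff_of_neg hk] at h1
    rw [div_le_iff_of_neg hk] at h2
    nlinarith
  · refine ⟨⟨by linarith, ?_⟩, ?_, ?_⟩
    · rw [le_div_iff_of_neg hk]; nlinarith
    · rw [div_le_iff_of_neg hk]; nlinarith
    · rw [div_le_iff_of_neg hk, div_mul_cancel₀ _ hκ₀]; linarith
  · obtain ⟨⟨-, h1⟩, h2, -⟩ := h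
    rw [le_div_iff₀ hk] at h1
    rw [div_le_iff₀ hk] at h2
    nlinarith
  · refine ⟨⟨by linarith, ?_⟩, ?_, ?_⟩
    · rw [le_div_iff₀ hk]; nlinarith
    · rw [div_le_iff₀ hk]; nlinarith
    · rw [div_le_div_iff₀ hk hk]; nlinarith
  · obtain ⟨⟨-, h1⟩, h2, -⟩ := h
    rw [le_div_iff_of_neg hk] at h1
    rw [div_le_iff_of_neg hk] at h2
    nlinarith
  · refine ⟨⟨by linarith, ?_⟩, ?_, ?_⟩
    · rw [le_div_iff_of_neg hk]; nlinarith
    · rw [div_le_iff_of_neg hk]; nlinarith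
    · rw [div_le_iff_of_neg hk, div_mul_cancel₀ _ hκ₀]; linarith
  · obtain ⟨⟨-, h1⟩, h2, -⟩ := h
    rw [le_div_iff₀ hk] at h1
    rw [div_le_iff₀ hk] at h2
    nlinarith
  · refine ⟨⟨by linarith, ?_⟩, ?_, ?_⟩
    · rw [le_div_iff₀ hk]; nlinarith
    · rw [div_le_iff₀ hk]; nlinarith
    · rw [div_le_div_iff₀ hk hk]; nlinarith
end

section
/- Let F, G : ℝ × ℝ → ℝ be continuous, Lipschitz in y, with F(x,y) < G(x,y) everywhere. Let y solve y' = F (an α-profile) and z solve z' = G (a β-profile) with y(c) = z(c) at a point c. Then for any x₁ < c < x₂ in the common domain, z(x₁) < y(x₁) and z(x₂) > y(x₂), and moreover c is the unique intersection point of y and z in the common domain. -/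
private lemma pos_right_aux {w : ℝ → ℝ} {w' t : ℝ} (h : HasDerivAt w w' t)
    (h0 : w t = 0) (hp : 0 < w') :
    ∃ ε > 0, ∀ x ∈ Set.Ioc t (t + ε), 0 < w x := by
  have hs : ∀ᶠ x in nhdsWithin t (Set.Ioi t), 0 < slope w t x :=
    ((hasDerivAt_iff_tendsto_slope.mp h).eventually (eventually_gt_nhds hp)).filter_mono
      (nhdsWithin_mono t (fun x hx => ne_of_gt hx))
  rw [eventually_nhdsWithin_iff] at hs
  obtain ⟨ε, hε, hball⟩ := Metric.eventually_nhds_iff.mp hs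
  refine ⟨ε / 2, by linarith, fun x hx => ?_⟩
  have hxt : t < x := hx.1
  have hdist : dist x t < ε := by
    rw [Real.dist_eq, abs_of_pos (by linarith)]
    linarith [hx.2]
  have hslope : 0 < slope w t x := hball hdist hxt
  rw [slope_def_field] at hslope
  rcases div_pos_iff.mp hslope with ⟨h1, _⟩ | ⟨_, h2⟩ <;> linarith

private lemma neg_left_aux {w : ℝ → ℝ} {w' t : ℝ} (h : HasDerivAt w w' t)
    (h0 : w t = 0) (hp : 0 < w') :
    ∃ ε > 0, ∀ x ∈ Set.Ico (t - ε) t, w x < 0 := by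
  have hs : ∀ᶠ x in nhdsWithin t (Set.Iio t), 0 < slope w t x :=
    ((hasDerivAt_iff_tendsto_slope.mp h).eventually (eventually_gt_nhds hp)).filter_mono
      (nhdsWithin_mono t (fun x hx => ne_of_lt hx))
  rw [eventually_nhdsWithin_iff] at hs
  obtain ⟨ε, hε, hball⟩ := Metric.eventually_nhds_iff.mp hs
  refine ⟨ε / 2, by linarith, fun x hx => ?_⟩
  have hxt : x < t := hx.2
  have hdist : dist x t < ε := by
    rw [Real.dist_eq, abs_of_neg (by linarith)]
    linarith [hx.1]
  have hslope : 0 < slope w t x := hball hdist hxt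
  rw [slope_def_field] at hslope
  rcases div_pos_iff.mp hslope with ⟨h1, h2⟩ | ⟨h1, _⟩ <;> linarith

private lemma main_right (w w' : ℝ → ℝ) (hw : ∀ x, HasDerivAt w (w' x) x)
    (hpos : ∀ x, w x = 0 → 0 < w' x) (c : ℝ) (hc : w c = 0) :
    ∀ x₂, c < x₂ → 0 < w x₂ := by
  intro x₂ hx₂
  by_contra hle
  push_neg at hle
  obtain ⟨ε, hε, hright⟩ := pos_right_aux (hw c) hc (hpos c hc)
  by_cases hcase : x₂ ≤ c + ε
  · exact absurd (hright x₂ ⟨hx₂, hcase⟩) (not_lt.mpr hle)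
  push_neg at hcase
  -- set of points in [c+ε, x₂] where w ≤ 0
  set B : Set ℝ := {x | x ∈ Set.Icc (c + ε) x₂ ∧ w x ≤ 0} with hB
  have hwcont : Continuous w := continuous_iff_continuousAt.mpr fun x => (hw x).continuousAt
  have hBne : B.Nonempty := ⟨x₂, ⟨le_of_lt hcase, le_refl _⟩, hle⟩
  have hBclosed : IsClosed B := by
    have : B = Set.Icc (c + ε) x₂ ∩ w ⁻¹' Set.Iic 0 := by
      ext x; simp [hB, Set.mem_setOf_eq, and_assoc]
    rw [this]
    exact isClosed_Icc.inter (IsClosed.preimage hwcont isClosed_Iic)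
  have hBbdd : BddBelow B := ⟨c + ε, fun x hx => hx.1.1⟩
  set t := sInf B with ht
  have htB : t ∈ B := hBclosed.csInf_mem hBne hBbdd
  have htc : c < t := lt_of_lt_of_le (by linarith) htB.1.1
  -- w > 0 on (c, t)
  have hpos_on : ∀ x, c < x → x < t → 0 < w x := by
    intro x hcx hxt
    by_cases hxe : x ≤ c + ε
    · exact hright x ⟨hcx, hxe⟩
    · push_neg at hxe
      by_contra hwx
      push_neg at hwx
      have hxB : x ∈ B := ⟨⟨le_of_lt hxe, le_trans hxt.le htB.1.2⟩, hwx⟩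
      exact absurd (csInf_le hBbdd hxB) (not_le.mpr hxt)
  -- w t = 0
  have hwt0 : w t = 0 := by
    have hge : 0 ≤ w t := by
      have htend : Filter.Tendsto w (nhdsWithin t (Set.Iio t)) (nhds (w t)) :=
        (hwcont.continuousAt).continuousWithinAt.tendsto
      refine ge_of_tendsto htend ?_
      rw [eventually_nhdsWithin_iff]
      filter_upwards [eventually_gt_nhds htc] with x hx1 hx2
      exact (hpos_on x hx1 hx2).le
    linarith [htB.2]
  obtain ⟨δ, hδ, hleft⟩ := neg_left_aux (hw t) hwt0 (hpos t hwt0)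
  set x := max ((c + t) / 2) (t - δ / 2) with hx
  have hx1 : c < x := lt_of_lt_of_le (by linarith) (le_max_left _ _)
  have hx2 : x < t := max_lt (by linarith) (by linarith)
  have hx3 : t - δ ≤ x := le_trans (by linarith) (le_max_right _ _)
  exact absurd (hleft x ⟨hx3, hx2⟩) (not_lt.mpr (hpos_on x hx1 hx2).le)

theorem tst : True := trivial

private lemma main_left (w w' : ℝ → ℝ) (hw : ∀ x, HasDerivAt w (w' x) x)
    (hpos : ∀ x, w x = 0 → 0 < w' x) (c : ℝ) (hc : w c = 0) :
    ∀ x₁, x₁ < c → w x₁ < 0 := by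
  intro x₁ hx₁
  have hv : ∀ x, HasDerivAt (fun s => -w (2 * c - s)) (w' (2 * c - x)) x := by
    intro x
    have hu : HasDerivAt (fun s : ℝ => 2 * c - s) (-1) x := (hasDerivAt_id x).const_sub (2 * c)
    have := ((hw (2 * c - x)).comp x hu).neg
    exact this.congr_deriv (by ring)
  have := main_right (fun s => -w (2 * c - s)) (fun s => w' (2 * c - s)) hv
    (fun s hs => hpos _ (neg_eq_zero.mp hs)) c (by show -w (2 * c - c) = 0; rw [show 2 * c - c = c by ring, hc, neg_zero]) (2 * c - x₁) (by linarith)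
  simp only [show 2 * c - (2 * c - x₁) = x₁ by ring] at this
  linarith


/-- Uniqueness of the intersection of an α-profile with a β-profile where `F < G`
strictly: if `y' = F(x,y)`, `z' = G(x,z)`, both sides continuous and Lipschitz in the
second variable, and `y c = z c`, then `z < y` before `c`, `z > y` after `c`, and `c`
is the only intersection point. -/
theorem alpha_beta_unique_intersection
    (F G : ℝ → ℝ → ℝ)
    (hFcont : Continuous (Function.uncurry F))
    (hGcont : Continuous (Function.uncurry G))
    (K : NNReal)
    (hFlip : ∀ x, LipschitzWith K (F x))
    (hGlip : ∀ x, LipschitzWith K (G x))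
    (hFG : ∀ x y : ℝ, F x y < G x y)
    (y z : ℝ → ℝ)
    (hy : ∀ x, HasDerivAt y (F x (y x)) x)
    (hz : ∀ x, HasDerivAt z (G x (z x)) x)
    (c : ℝ) (hc : y c = z c) :
    (∀ x₁, x₁ < c → z x₁ < y x₁) ∧
    (∀ x₂, c < x₂ → y x₂ < z x₂) ∧
    (∀ x, y x = z x → x = c) := by
  set w : ℝ → ℝ := fun x => z x - y x with hwdef
  have hw : ∀ x, HasDerivAt w (G x (z x) - F x (y x)) x := fun x => (hz x).sub (hy x)
  have hpos : ∀ x, w x = 0 → 0 < G x (z x) - F x (y x) := by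
    intro x hx
    have hzy : z x = y x := by simpa [hwdef, sub_eq_zero] using hx
    rw [hzy]
    linarith [hFG x (y x)]
  have hwc : w c = 0 := by simp [hwdef, hc]
  have hleft := main_left w _ hw hpos c hwc
  have hright := main_right w _ hw hpos c hwc
  simp only [hwdef] at hleft hright
  refine ⟨fun x₁ h => by linarith [hleft x₁ h], fun x₂ h => by linarith [hright x₂ h],
    fun x hx => ?_⟩
  by_contra hne
  rcases lt_or_gt_of_ne hne with h | h
  · linarith [hleft x h]
  · linarith [hright x h]
end
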